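/- For any random variable T taking values in {1,…,n} and any 1 < q < ∞, the functional H(T;q) = (Σₜ (P_T(t)^{1/(1−q)} + (1−P_T(t))^{1/(1−q)})^{1−q})^{1/q} satisfies 0 ≤ H(T;q) ≤ 1, and H(T;q) = 0 if and only if T is deterministic (some P_T(t) = 1). -/

import Mathlib

open MeasureTheory Set ENNReal

/-- The functional `H(T;q)` for `1 < q < ∞`; the `ℝ≥0∞`-valued power conventions
(`0^{neg} = ∞`, `∞^{neg} = 0`) make terms with `P_T(t) ∈ {0,1}` contribute `0`. -/
noncomputable def Hq {Ω : Type*} [MeasurableSpace Ω] (μ : MeasureTheory.Measure Ω)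
    (n : ℕ) (T : Ω → Fin n) (q : ℝ) : ℝ≥0∞ :=
  (∑ t : Fin n,
    ((μ {ω | T ω = t}) ^ (1 / (1 - q)) + (1 - μ {ω | T ω = t}) ^ (1 / (1 - q)))
      ^ (1 - q)) ^ (1 / q)

lemma rpow_anti {x y : ℝ≥0∞} {z : ℝ} (hxy : x ≤ y) (hz : z ≤ 0) : y ^ z ≤ x ^ z := by
  have hx' : x ^ z = (x ^ (-z))⁻¹ := by rw [← ENNReal.rpow_neg, neg_neg]
  have hy' : y ^ z = (y ^ (-z))⁻¹ := by rw [← ENNReal.rpow_neg, neg_neg]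
  rw [hx', hy']
  exact ENNReal.inv_le_inv' (ENNReal.rpow_le_rpow hxy (by linarith : (0:ℝ) ≤ -z))

lemma term_le {q : ℝ} (hq : 1 < q) (x : ℝ≥0∞) (hx : x ≤ 1) :
    (x ^ (1 / (1 - q)) + (1 - x) ^ (1 / (1 - q))) ^ (1 - q) ≤ x := by
  have h1q : 1 - q < 0 := by linarith
  calc (x ^ (1 / (1 - q)) + (1 - x) ^ (1 / (1 - q))) ^ (1 - q)
      ≤ (x ^ (1 / (1 - q))) ^ (1 - q) :=
        rpow_anti le_self_add h1q.le
    _ = x ^ ((1 / (1 - q)) * (1 - q)) := (ENNReal.rpow_mul x _ _).symm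
    _ = x := by
        rw [one_div_mul_cancel (by linarith : (1 : ℝ) - q ≠ 0), ENNReal.rpow_one]

lemma term_eq_zero_iff {q : ℝ} (hq : 1 < q) (x : ℝ≥0∞) (hx : x ≤ 1) :
    (x ^ (1 / (1 - q)) + (1 - x) ^ (1 / (1 - q))) ^ (1 - q) = 0 ↔ x = 0 ∨ x = 1 := by
  have h1q : 1 - q < 0 := by linarith
  have ha : 1 / (1 - q) < 0 := div_neg_of_pos_of_neg one_pos h1q
  have hxt : x ≠ ⊤ := (hx.trans_lt one_lt_top).ne
  have hxt' : (1 : ℝ≥0∞) - x ≠ ⊤ := (tsub_le_self.trans_lt one_lt_top).ne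
  rw [ENNReal.rpow_eq_zero_iff]
  constructor
  · rintro (⟨_, h⟩ | ⟨h, _⟩)
    · linarith
    · rcases ENNReal.add_eq_top.mp h with h | h
      · rcases ENNReal.rpow_eq_top_iff.mp h with ⟨h0, _⟩ | ⟨h0, _⟩
        · exact Or.inl h0
        · exact absurd h0 hxt
      · rcases ENNReal.rpow_eq_top_iff.mp h with ⟨h0, _⟩ | ⟨h0, _⟩
        · exact Or.inr (le_antisymm hx (tsub_eq_zero_iff_le.mp h0))
        · exact absurd h0 hxt'
  · rintro (h | h)
    · refine Or.inr ⟨?_, h1q⟩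
      rw [h, ENNReal.zero_rpow_of_neg ha, top_add]
    · refine Or.inr ⟨?_, h1q⟩
      rw [h, tsub_self, ENNReal.zero_rpow_of_neg ha, add_top]

/-- For `1 < q < ∞`: `0 ≤ H(T;q) ≤ 1`, and `H(T;q) = 0` iff `T` is deterministic. -/
theorem stmt14 {Ω : Type*} [MeasurableSpace Ω] (μ : Measure Ω) [IsProbabilityMeasure μ]
    (n : ℕ) (T : Ω → Fin n) (hT : Measurable T) (q : ℝ) (hq : 1 < q) :
    0 ≤ Hq μ n T q ∧ Hq μ n T q ≤ 1 ∧
      (Hq μ n T q = 0 ↔ ∃ t : Fin n, μ {ω | T ω = t} = 1) := by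
  have hmeas : ∀ t : Fin n, MeasurableSet {ω | T ω = t} := fun t =>
    hT (measurableSet_singleton t)
  have hple : ∀ t : Fin n, μ {ω | T ω = t} ≤ 1 := fun t => prob_le_one
  have hsum : ∑ t : Fin n, μ {ω | T ω = t} = 1 := by
    have h := sum_measure_preimage_singleton (μ := μ) (Finset.univ : Finset (Fin n))
      (f := T) (fun t _ => hmeas t)
    simp at h
    exact h
  have hqpos : 0 < 1 / q := by positivity
  refine ⟨zero_le, ?_, ?_⟩
  · -- Hq ≤ 1
    have hS : (∑ t : Fin n,
        ((μ {ω | T ω = t}) ^ (1 / (1 - q)) + (1 - μ {ω | T ω = t}) ^ (1 / (1 - q)))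
          ^ (1 - q)) ≤ 1 := by
      calc _ ≤ ∑ t : Fin n, μ {ω | T ω = t} :=
            Finset.sum_le_sum fun t _ => term_le hq _ (hple t)
        _ = 1 := hsum
    calc Hq μ n T q ≤ (1 : ℝ≥0∞) ^ (1 / q) := ENNReal.rpow_le_rpow hS hqpos.le
      _ = 1 := ENNReal.one_rpow _
  · -- zero iff deterministic
    unfold Hq
    rw [ENNReal.rpow_eq_zero_iff]
    constructor
    · rintro (⟨hS, _⟩ | ⟨_, hneg⟩)
      · have hall : ∀ t : Fin n, μ {ω | T ω = t} = 0 ∨ μ {ω | T ω = t} = 1 := by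
          intro t
          have := (Finset.sum_eq_zero_iff.mp hS) t (Finset.mem_univ t)
          exact (term_eq_zero_iff hq _ (hple t)).mp this
        by_contra hno
        push_neg at hno
        have hzero : ∀ t : Fin n, μ {ω | T ω = t} = 0 := fun t =>
          (hall t).resolve_right (hno t)
        rw [Finset.sum_eq_zero (fun t _ => hzero t)] at hsum
        exact zero_ne_one hsum
      · linarith
    · rintro ⟨t, ht⟩
      refine Or.inl ⟨?_, hqpos⟩
      have hcompl : μ ({ω | T ω = t}ᶜ) = 0 := by
        rw [measure_compl (hmeas t) (measure_ne_top μ _), ht, measure_univ, tsub_self]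
      apply Finset.sum_eq_zero
      intro s _
      rcases eq_or_ne s t with rfl | hst
      · exact (term_eq_zero_iff hq _ (hple s)).mpr (Or.inr ht)
      · refine (term_eq_zero_iff hq _ (hple s)).mpr (Or.inl ?_)
        refine measure_mono_null ?_ hcompl
        intro ω hω
        simp only [mem_setOf_eq, mem_compl_iff] at hω ⊢
        rw [hω]
        exact fun h => hst (h ▸ rfl)
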